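/- Let K : ℝ → ℝ be continuous with -c² ≤ K(t) ≤ 0 for all t, for some constant c > 0. Then for every w ∈ ℝ there exists a unique Jacobi solution j : ℝ → ℝ (j'' = -K·j) with j(0) = w such that t ↦ |j(t)| is nondecreasing on ℝ. That is, there is a unique unstable Jacobi field with any prescribed initial value. -/

import Mathlib

open intervalIntegral MeasureTheory Set

noncomputable def pic (q : ℝ → ℝ) (a b : ℝ) : ℕ → ℝ → ℝ
  | 0 => fun t => a + b * t
  | n+1 => fun t => ∫ s in (0:ℝ)..t, ∫ r in (0:ℝ)..s, q r * pic q a b n r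

noncomputable def picD (q : ℝ → ℝ) (a b : ℝ) : ℕ → ℝ → ℝ
  | 0 => fun _ => b
  | n+1 => fun t => ∫ r in (0:ℝ)..t, q r * pic q a b n r

lemma primitive_hasDerivAt {g : ℝ → ℝ} (hg : Continuous g) (t : ℝ) :
    HasDerivAt (fun u => ∫ x in (0:ℝ)..u, g x) (g t) t :=
  (hg.integral_hasStrictDerivAt 0 t).hasDerivAt

lemma primitive_continuous {g : ℝ → ℝ} (hg : Continuous g) :
    Continuous (fun u => ∫ x in (0:ℝ)..u, g x) :=
  continuous_iff_continuousAt.2 fun t => (primitive_hasDerivAt hg t).continuousAt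

section
variable {q : ℝ → ℝ} {a b : ℝ}

lemma pic_continuous (hq : Continuous q) (n : ℕ) : Continuous (pic q a b n) := by
  induction n with
  | zero => exact continuous_const.add (continuous_const.mul continuous_id)
  | succ n ih =>
    exact primitive_continuous (primitive_continuous (hq.mul ih))

lemma picD_continuous (hq : Continuous q) (n : ℕ) : Continuous (picD q a b n) := by
  cases n with
  | zero => exact continuous_const
  | succ n => exact primitive_continuous (hq.mul (pic_continuous hq n))

lemma pic_hasDerivAt (hq : Continuous q) (n : ℕ) (t : ℝ) :
    HasDerivAt (pic q a b n) (picD q a b n t) t := by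
  cases n with
  | zero =>
    have h := ((hasDerivAt_id t).const_mul b).const_add a
    simp only [id_eq, mul_one] at h
    exact h
  | succ n =>
    exact primitive_hasDerivAt (primitive_continuous (hq.mul (pic_continuous hq n))) t

lemma picD_hasDerivAt_succ (hq : Continuous q) (n : ℕ) (t : ℝ) :
    HasDerivAt (picD q a b (n+1)) (q t * pic q a b n t) t :=
  primitive_hasDerivAt (hq.mul (pic_continuous hq n)) t

lemma pic_zero_eq (n : ℕ) (hn : n ≠ 0) : pic q a b n 0 = 0 := by
  cases n with
  | zero => exact absurd rfl hn
  | succ n => simp [pic]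

lemma picD_zero_eq (n : ℕ) (hn : n ≠ 0) : picD q a b n 0 = 0 := by
  cases n with
  | zero => exact absurd rfl hn
  | succ n => simp [picD]

end

lemma abs_le_abs_of_mem_uIcc {s t : ℝ} (h : s ∈ uIcc (0:ℝ) t) : |s| ≤ |t| := by
  rcases le_total 0 t with ht | ht
  · rw [uIcc_of_le ht] at h
    rw [abs_of_nonneg h.1, abs_of_nonneg ht]; exact h.2
  · rw [uIcc_of_ge ht] at h
    rw [abs_of_nonpos h.2, abs_of_nonpos ht]; linarith [h.1]

lemma abs_intervalIntegral_le {f g : ℝ → ℝ} (hf : Continuous f) (hg : Continuous g) (t : ℝ)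
    (h : ∀ s ∈ uIcc (0:ℝ) t, |f s| ≤ g s) :
    |∫ s in (0:ℝ)..t, f s| ≤ |∫ s in (0:ℝ)..t, g s| := by
  have key : ∀ u v : ℝ, u ≤ v → (∀ s ∈ Icc u v, |f s| ≤ g s) →
      |∫ s in u..v, f s| ≤ |∫ s in u..v, g s| := by
    intro u v huv hle
    have h1 : |∫ s in u..v, f s| ≤ |∫ s in u..v, (fun x => |f x|) s| := by
      simpa [Real.norm_eq_abs] using
        intervalIntegral.norm_integral_le_abs_integral_norm (f := f) (a := u) (b := v)
          (μ := volume)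
    have h2 : (∫ s in u..v, (fun x => |f x|) s) ≤ ∫ s in u..v, g s :=
      intervalIntegral.integral_mono_on huv (hf.abs.intervalIntegrable u v)
        (hg.intervalIntegrable u v) hle
    have h3 : (0:ℝ) ≤ ∫ s in u..v, (fun x => |f x|) s :=
      intervalIntegral.integral_nonneg huv (fun x _ => abs_nonneg _)
    calc |∫ s in u..v, f s| ≤ |∫ s in u..v, (fun x => |f x|) s| := h1
      _ = ∫ s in u..v, (fun x => |f x|) s := abs_of_nonneg h3
      _ ≤ ∫ s in u..v, g s := h2
      _ ≤ |∫ s in u..v, g s| := le_abs_self _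
  rcases le_total 0 t with ht | ht
  · rw [uIcc_of_le ht] at h
    exact key 0 t ht h
  · rw [uIcc_of_ge ht] at h
    rw [show (∫ s in (0:ℝ)..t, f s) = -∫ s in t..(0:ℝ), f s from intervalIntegral.integral_symm t 0,
      show (∫ s in (0:ℝ)..t, g s) = -∫ s in t..(0:ℝ), g s from intervalIntegral.integral_symm t 0,
      abs_neg, abs_neg]
    exact key t 0 ht h

lemma abs_integral_abs_pow_le (k : ℕ) (t : ℝ) :
    |∫ s in (0:ℝ)..t, |s| ^ k| ≤ |t| ^ (k+1) / (k+1) := by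
  have key : ∀ u : ℝ, 0 ≤ u → (∫ s in (0:ℝ)..u, |s| ^ k) = u ^ (k+1) / (k+1) := by
    intro u hu
    have : (∫ s in (0:ℝ)..u, |s| ^ k) = ∫ s in (0:ℝ)..u, s ^ k := by
      apply intervalIntegral.integral_congr
      intro s hs
      rw [uIcc_of_le hu] at hs
      simp [abs_of_nonneg hs.1]
    rw [this, integral_pow]
    simp
  rcases le_total 0 t with ht | ht
  · rw [key t ht, abs_of_nonneg (by positivity), abs_of_nonneg ht]
  · have h1 := intervalIntegral.integral_symm (f := fun s => |s| ^ k) (μ := volume) t 0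
    have h2 : (∫ s in t..(0:ℝ), |s| ^ k) = ∫ s in (0:ℝ)..(-t), |s| ^ k := by
      have h3 := intervalIntegral.integral_comp_neg (a := t) (b := 0) (fun s => |s| ^ k)
      simpa using h3
    have hnt : (0:ℝ) ≤ -t := by linarith
    rw [h1, h2, key (-t) hnt, abs_neg,
      abs_of_nonneg (div_nonneg (pow_nonneg hnt _) (by positivity)), abs_of_nonpos ht]

section
variable {q : ℝ → ℝ} {a b c : ℝ}

lemma pic_succ_eq (n : ℕ) (t : ℝ) :
    pic q a b (n+1) t = ∫ s in (0:ℝ)..t, picD q a b (n+1) s := by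
  simp [pic, picD]

lemma picD_bound_step (hq : Continuous q) (hq0 : ∀ t, 0 ≤ q t) (hqc : ∀ t, q t ≤ c^2)
    (hc : 0 ≤ c) {R : ℝ} (n : ℕ)
    (IH : ∀ r, |r| ≤ R → |pic q a b n r| ≤
      (|a| + |b| * R) * (c ^ (2*n) * |r| ^ (2*n) / (Nat.factorial (2*n)))) :
    ∀ t, |t| ≤ R → |picD q a b (n+1) t| ≤
      (|a| + |b| * R) * (c ^ (2*n+2) * |t| ^ (2*n+1) / (Nat.factorial (2*n) * (2*n+1))) := by
  intro t ht
  set M := |a| + |b| * R with hMdef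
  have hM : 0 ≤ M := by
    have : 0 ≤ |b| * R := by
      rcases le_or_gt 0 R with h | h
      · positivity
      · nlinarith [abs_nonneg b, abs_nonneg t, ht, abs_nonneg a]
    positivity
  have hfac : (0:ℝ) < (Nat.factorial (2*n) : ℝ) := by
    exact_mod_cast Nat.factorial_pos (2*n)
  set A := M * c ^ (2*n+2) / (Nat.factorial (2*n)) with hAdef
  have hA : 0 ≤ A := by positivity
  have hcont : Continuous (fun r => q r * pic q a b n r) := hq.mul (pic_continuous hq n)
  have hgcont : Continuous (fun r : ℝ => A * r ^ (2*n)) :=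
    continuous_const.mul (continuous_pow _)
  have hbd : ∀ r ∈ uIcc (0:ℝ) t, |q r * pic q a b n r| ≤ A * r ^ (2*n) := by
    intro r hr
    have hrR : |r| ≤ R := le_trans (abs_le_abs_of_mem_uIcc hr) ht
    have h1 : |q r| ≤ c ^ 2 := by
      rw [abs_of_nonneg (hq0 r)]; exact hqc r
    have h2 := IH r hrR
    calc |q r * pic q a b n r| = |q r| * |pic q a b n r| := abs_mul _ _
      _ ≤ c ^ 2 * (M * (c ^ (2*n) * |r| ^ (2*n) / (Nat.factorial (2*n)))) := by
          apply mul_le_mul h1 h2 (abs_nonneg _) (by positivity)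
      _ = A * |r| ^ (2*n) := by rw [hAdef]; ring
      _ = A * r ^ (2*n) := by rw [(even_two_mul n).pow_abs]
  have key : |picD q a b (n+1) t| ≤ |∫ r in (0:ℝ)..t, A * r ^ (2*n)| := by
    show |∫ r in (0:ℝ)..t, q r * pic q a b n r| ≤ _
    exact abs_intervalIntegral_le hcont hgcont t hbd
  have hval : (∫ r in (0:ℝ)..t, A * r ^ (2*n)) = A * (t ^ (2*n+1) / (2*n+1)) := by
    rw [intervalIntegral.integral_const_mul, integral_pow]
    push_cast
    ring
  have h2n1 : (0:ℝ) < (2*n+1 : ℝ) := by positivity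
  calc |picD q a b (n+1) t| ≤ |∫ r in (0:ℝ)..t, A * r ^ (2*n)| := key
    _ = A * (|t| ^ (2*n+1) / (2*n+1)) := by
        rw [hval, abs_mul, abs_of_nonneg hA, abs_div, abs_pow,
          abs_of_nonneg (le_of_lt h2n1)]
    _ = M * (c ^ (2*n+2) * |t| ^ (2*n+1) / (Nat.factorial (2*n) * (2*n+1))) := by
        rw [hAdef]
        field_simp

lemma pic_bound (hq : Continuous q) (hq0 : ∀ t, 0 ≤ q t) (hqc : ∀ t, q t ≤ c^2)
    (hc : 0 ≤ c) {R : ℝ} :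
    ∀ n, ∀ t, |t| ≤ R → |pic q a b n t| ≤
      (|a| + |b| * R) * (c ^ (2*n) * |t| ^ (2*n) / (Nat.factorial (2*n))) := by
  intro n
  induction n with
  | zero =>
    intro t ht
    have hbR : |b| * |t| ≤ |b| * R := mul_le_mul_of_nonneg_left ht (abs_nonneg b)
    have : |pic q a b 0 t| ≤ |a| + |b| * R := by
      calc |a + b * t| ≤ |a| + |b * t| := abs_add_le _ _
        _ = |a| + |b| * |t| := by rw [abs_mul]
        _ ≤ |a| + |b| * R := by linarith
    simpa [Nat.factorial] using this
  | succ n IH =>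
    intro t ht
    have hR : 0 ≤ R := le_trans (abs_nonneg t) ht
    set M := |a| + |b| * R with hMdef
    have hM : 0 ≤ M := by positivity
    have hfac : (0:ℝ) < (Nat.factorial (2*n) : ℝ) := by
      exact_mod_cast Nat.factorial_pos (2*n)
    have hD := picD_bound_step hq hq0 hqc hc n IH
    set B := M * c ^ (2*n+2) / (Nat.factorial (2*n) * (2*n+1)) with hBdef
    have hB : 0 ≤ B := by positivity
    have hcont : Continuous (picD q a b (n+1)) := picD_continuous hq (n+1)
    have hgcont : Continuous (fun s : ℝ => B * |s| ^ (2*n+1)) :=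
      continuous_const.mul (continuous_abs.pow _)
    have hbd : ∀ s ∈ uIcc (0:ℝ) t, |picD q a b (n+1) s| ≤ B * |s| ^ (2*n+1) := by
      intro s hs
      have hsR : |s| ≤ R := le_trans (abs_le_abs_of_mem_uIcc hs) ht
      calc |picD q a b (n+1) s| ≤
          M * (c ^ (2*n+2) * |s| ^ (2*n+1) / (Nat.factorial (2*n) * (2*n+1))) := hD s hsR
        _ = B * |s| ^ (2*n+1) := by rw [hBdef]; ring
    have key : |pic q a b (n+1) t| ≤ |∫ s in (0:ℝ)..t, B * |s| ^ (2*n+1)| := by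
      rw [pic_succ_eq]
      exact abs_intervalIntegral_le hcont hgcont t hbd
    have habs : |∫ s in (0:ℝ)..t, B * |s| ^ (2*n+1)| ≤ B * (|t| ^ (2*n+2) / (2*n+2)) := by
      rw [intervalIntegral.integral_const_mul, abs_mul, abs_of_nonneg hB]
      apply mul_le_mul_of_nonneg_left _ hB
      have := abs_integral_abs_pow_le (2*n+1) t
      calc |∫ s in (0:ℝ)..t, |s| ^ (2*n+1)| ≤ |t| ^ (2*n+1+1) / ((2*n+1 : ℕ) + 1) := this
        _ = |t| ^ (2*n+2) / (2*n+2) := by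
            have : 2*n+1+1 = 2*n+2 := by ring
            rw [this]; push_cast; ring_nf
    have hfaceq : ((Nat.factorial (2*(n+1))) : ℝ) =
        (Nat.factorial (2*n)) * (2*n+1) * (2*n+2) := by
      have h1 : 2*(n+1) = (2*n+1) + 1 := by ring
      rw [h1, Nat.factorial_succ, Nat.factorial_succ]
      push_cast
      ring
    calc |pic q a b (n+1) t| ≤ B * (|t| ^ (2*n+2) / (2*n+2)) := le_trans key habs
      _ = M * (c ^ (2*(n+1)) * |t| ^ (2*(n+1)) / (Nat.factorial (2*(n+1)))) := by
          rw [hBdef, hfaceq]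
          have h1 : 2*(n+1) = 2*n+2 := by ring
          rw [h1]
          field_simp

lemma picD_bound (hq : Continuous q) (hq0 : ∀ t, 0 ≤ q t) (hqc : ∀ t, q t ≤ c^2)
    (hc : 0 ≤ c) {R : ℝ} (n : ℕ) :
    ∀ t, |t| ≤ R → |picD q a b (n+1) t| ≤
      (|a| + |b| * R) * (c ^ (2*n+2) * |t| ^ (2*n+1) / (Nat.factorial (2*n) * (2*n+1))) :=
  picD_bound_step hq hq0 hqc hc n (pic_bound hq hq0 hqc hc n)

lemma summable_aux {x : ℝ} (hx : 0 ≤ x) :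
    Summable (fun n : ℕ => x ^ (2*n) / (Nat.factorial (2*n) : ℝ)) := by
  refine Summable.of_nonneg_of_le (fun n => by positivity) (fun n => ?_)
    (Real.summable_pow_div_factorial (x^2))
  rw [← pow_mul]
  have hfle : (Nat.factorial n : ℝ) ≤ (Nat.factorial (2*n) : ℝ) := by
    exact_mod_cast Nat.factorial_le (by omega)
  have hfpos : (0:ℝ) < (Nat.factorial n : ℝ) := by
    exact_mod_cast Nat.factorial_pos n
  gcongr

noncomputable def sol (q : ℝ → ℝ) (a b : ℝ) : ℝ → ℝ := fun t => ∑' n, pic q a b n t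

noncomputable def solD (q : ℝ → ℝ) (a b : ℝ) : ℝ → ℝ := fun t => ∑' n, picD q a b n t

lemma summable_pic (hq : Continuous q) (hq0 : ∀ t, 0 ≤ q t) (hqc : ∀ t, q t ≤ c^2)
    (hc : 0 ≤ c) (t : ℝ) : Summable (fun n => pic q a b n t) := by
  apply Summable.of_norm_bounded
    (g := fun n => (|a| + |b| * |t|) * (c ^ (2*n) * |t| ^ (2*n) / (Nat.factorial (2*n))))
    _ (fun n => pic_bound hq hq0 hqc hc n t le_rfl)
  have h1 : Summable (fun n : ℕ => (c*|t|) ^ (2*n) / (Nat.factorial (2*n) : ℝ)) :=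
    summable_aux (by positivity)
  have := h1.mul_left (|a| + |b| * |t|)
  apply this.congr
  intro n
  rw [mul_pow]

lemma summable_pic_zero : Summable (fun n => pic q a b n 0) := by
  apply summable_of_ne_finset_zero (s := {0})
  intro n hn
  simp only [Finset.mem_singleton] at hn
  exact pic_zero_eq n hn

lemma summable_picD_zero : Summable (fun n => picD q a b n 0) := by
  apply summable_of_ne_finset_zero (s := {0})
  intro n hn
  simp only [Finset.mem_singleton] at hn
  exact picD_zero_eq n hn

lemma mem_ball_abs {y R : ℝ} (h : y ∈ Metric.ball (0:ℝ) R) : |y| ≤ R := by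
  rw [Metric.mem_ball, Real.dist_eq, sub_zero] at h
  exact le_of_lt h

lemma sol_hasDerivAt (hq : Continuous q) (hq0 : ∀ t, 0 ≤ q t) (hqc : ∀ t, q t ≤ c^2)
    (hc : 0 ≤ c) (t : ℝ) : HasDerivAt (sol q a b) (solD q a b t) t := by
  set R := |t| + 1 with hRdef
  have hR : (0:ℝ) < R := by positivity
  set M := |a| + |b| * R with hMdef
  have hM : 0 ≤ M := by positivity
  set u : ℕ → ℝ := fun n => match n with
    | 0 => |b|
    | m+1 => M * (c ^ (2*m+2) * R ^ (2*m+1) / (Nat.factorial (2*m) * (2*m+1)))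
  have hu : Summable u := by
    rw [← summable_nat_add_iff 1]
    have h1 : Summable (fun n : ℕ => (M*(c^2*R)) * ((c*R) ^ (2*n) / (Nat.factorial (2*n) : ℝ))) :=
      (summable_aux (by positivity)).mul_left _
    refine Summable.of_nonneg_of_le (fun n => ?_) (fun n => ?_) h1
    · show (0:ℝ) ≤ M * (c ^ (2*n+2) * R ^ (2*n+1) / (Nat.factorial (2*n) * (2*n+1)))
      have hfac : (0:ℝ) < (Nat.factorial (2*n) : ℝ) := by
        exact_mod_cast Nat.factorial_pos (2*n)
      positivity
    · show M * (c ^ (2*n+2) * R ^ (2*n+1) / (Nat.factorial (2*n) * (2*n+1))) ≤ _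
      have hfac : (0:ℝ) < (Nat.factorial (2*n) : ℝ) := by
        exact_mod_cast Nat.factorial_pos (2*n)
      have hrw : (M*(c^2*R)) * ((c*R) ^ (2*n) / (Nat.factorial (2*n) : ℝ))
          = M * (c ^ (2*n+2) * R ^ (2*n+1) / ((Nat.factorial (2*n) : ℝ))) := by
        rw [mul_pow]
        field_simp
        ring
      rw [hrw]
      have hnum : (0:ℝ) ≤ c ^ (2*n+2) * R ^ (2*n+1) := by positivity
      apply mul_le_mul_of_nonneg_left _ hM
      apply div_le_div_of_nonneg_left hnum hfac
      nlinarith [Nat.cast_nonneg (α := ℝ) n, hfac]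
  refine hasDerivAt_tsum_of_isPreconnected hu Metric.isOpen_ball
    (convex_ball (0:ℝ) R).isPreconnected
    (fun n y _ => pic_hasDerivAt hq n y) (fun n y hy => ?_)
    (Metric.mem_ball_self hR) summable_pic_zero ?_
  · rcases n with _ | m
    · show ‖(b:ℝ)‖ ≤ |b|
      simp [Real.norm_eq_abs]
    · show ‖picD q a b (m+1) y‖ ≤ M * (c ^ (2*m+2) * R ^ (2*m+1) / (Nat.factorial (2*m) * (2*m+1)))
      have hyR : |y| ≤ R := mem_ball_abs hy
      have hb := picD_bound (a := a) (b := b) hq hq0 hqc hc m y hyR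
      rw [Real.norm_eq_abs]
      refine le_trans hb ?_
      have hfac : (0:ℝ) < (Nat.factorial (2*m) : ℝ) := by
        exact_mod_cast Nat.factorial_pos (2*m)
      gcongr
  · rw [Metric.mem_ball, Real.dist_eq, sub_zero]
    simp only [hRdef]
    linarith [abs_nonneg t]

lemma solD_hasDerivAt (hq : Continuous q) (hq0 : ∀ t, 0 ≤ q t) (hqc : ∀ t, q t ≤ c^2)
    (hc : 0 ≤ c) (t : ℝ) : HasDerivAt (solD q a b) (q t * sol q a b t) t := by
  set D : ℕ → ℝ → ℝ := fun n => match n with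
    | 0 => fun _ => (0:ℝ)
    | m+1 => fun y => q y * pic q a b m y with hDdef
  set R := |t| + 1 with hRdef
  have hR : (0:ℝ) < R := by positivity
  set M := |a| + |b| * R with hMdef
  have hM : 0 ≤ M := by positivity
  set u : ℕ → ℝ := fun n => match n with
    | 0 => (0:ℝ)
    | m+1 => c^2 * (M * (c ^ (2*m) * R ^ (2*m) / (Nat.factorial (2*m))))
  have hu : Summable u := by
    rw [← summable_nat_add_iff 1]
    have h1 : Summable (fun n : ℕ => (c^2*M) * ((c*R) ^ (2*n) / (Nat.factorial (2*n) : ℝ))) :=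
      (summable_aux (by positivity)).mul_left _
    apply h1.congr
    intro n
    show (c^2*M) * ((c*R) ^ (2*n) / (Nat.factorial (2*n) : ℝ))
        = c^2 * (M * (c ^ (2*n) * R ^ (2*n) / (Nat.factorial (2*n))))
    rw [mul_pow]
    ring
  have hDbound : ∀ n y, |y| ≤ R → ‖D n y‖ ≤ u n := by
    intro n y hy
    rcases n with _ | m
    · show ‖(0:ℝ)‖ ≤ (0:ℝ)
      simp
    · show ‖q y * pic q a b m y‖ ≤ c^2 * (M * (c ^ (2*m) * R ^ (2*m) / (Nat.factorial (2*m))))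
      rw [Real.norm_eq_abs, abs_mul]
      have h1 : |q y| ≤ c ^ 2 := by rw [abs_of_nonneg (hq0 y)]; exact hqc y
      have h2 : |pic q a b m y| ≤ M * (c ^ (2*m) * |y| ^ (2*m) / (Nat.factorial (2*m))) :=
        pic_bound hq hq0 hqc hc m y hy
      have hfac : (0:ℝ) < (Nat.factorial (2*m) : ℝ) := by
        exact_mod_cast Nat.factorial_pos (2*m)
      have h3 : M * (c ^ (2*m) * |y| ^ (2*m) / (Nat.factorial (2*m)))
          ≤ M * (c ^ (2*m) * R ^ (2*m) / (Nat.factorial (2*m))) := by gcongr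
      exact mul_le_mul h1 (le_trans h2 h3) (abs_nonneg _) (by positivity)
  have hDsum : Summable (fun n => D n t) :=
    Summable.of_norm_bounded hu (fun n => hDbound n t (by simp only [hRdef]; linarith [abs_nonneg t]))
  have key : HasDerivAt (solD q a b) (∑' n, D n t) t := by
    refine hasDerivAt_tsum_of_isPreconnected hu Metric.isOpen_ball
      (convex_ball (0:ℝ) R).isPreconnected
      (fun n y _ => ?_) (fun n y hy => hDbound n y (mem_ball_abs hy))
      (Metric.mem_ball_self hR) summable_picD_zero ?_
    · rcases n with _ | m
      · show HasDerivAt (picD q a b 0) ((0:ℝ)) y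
        exact hasDerivAt_const y b
      · exact picD_hasDerivAt_succ hq m y
    · rw [Metric.mem_ball, Real.dist_eq, sub_zero]
      simp only [hRdef]
      linarith [abs_nonneg t]
  have heq : (∑' n, D n t) = q t * sol q a b t := by
    rw [Summable.tsum_eq_zero_add hDsum]
    show (0:ℝ) + ∑' n, q t * pic q a b n t = _
    rw [zero_add, tsum_mul_left]
    rfl
  rwa [heq] at key

lemma sol_zero : sol q a b 0 = a := by
  unfold sol
  rw [tsum_eq_single 0 (fun n hn => pic_zero_eq n hn)]
  simp [pic]

lemma solD_zero : solD q a b 0 = b := by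
  unfold solD
  rw [tsum_eq_single 0 (fun n hn => picD_zero_eq n hn)]
  simp [picD]

lemma sol_differentiable (hq : Continuous q) (hq0 : ∀ t, 0 ≤ q t) (hqc : ∀ t, q t ≤ c^2)
    (hc : 0 ≤ c) : Differentiable ℝ (sol q a b) :=
  fun t => (sol_hasDerivAt hq hq0 hqc hc t).differentiableAt

lemma sol_deriv (hq : Continuous q) (hq0 : ∀ t, 0 ≤ q t) (hqc : ∀ t, q t ≤ c^2)
    (hc : 0 ≤ c) : deriv (sol q a b) = solD q a b :=
  funext fun t => (sol_hasDerivAt hq hq0 hqc hc t).deriv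

lemma solD_differentiable (hq : Continuous q) (hq0 : ∀ t, 0 ≤ q t) (hqc : ∀ t, q t ≤ c^2)
    (hc : 0 ≤ c) : Differentiable ℝ (solD q a b) :=
  fun t => (solD_hasDerivAt hq hq0 hqc hc t).differentiableAt

lemma solD_deriv (hq : Continuous q) (hq0 : ∀ t, 0 ≤ q t) (hqc : ∀ t, q t ≤ c^2)
    (hc : 0 ≤ c) (t : ℝ) : deriv (solD q a b) t = q t * sol q a b t :=
  (solD_hasDerivAt hq hq0 hqc hc t).deriv

end

lemma my_integral_nonpos {f : ℝ → ℝ} {u v : ℝ} (huv : u ≤ v) (h : ∀ x ∈ Icc u v, f x ≤ 0) :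
    (∫ x in u..v, f x) ≤ 0 := by
  have h0 : 0 ≤ ∫ x in u..v, -f x :=
    intervalIntegral.integral_nonneg huv (fun x hx => neg_nonneg.2 (h x hx))
  rw [intervalIntegral.integral_neg] at h0
  linarith

section
variable {q : ℝ → ℝ}

lemma pic_C_nonneg (hq0 : ∀ t, 0 ≤ q t) : ∀ n t, 0 ≤ pic q 1 0 n t := by
  intro n
  induction n with
  | zero =>
    intro t
    show (0:ℝ) ≤ 1 + 0 * t
    norm_num
  | succ n ih =>
    intro t
    have hInn : ∀ s, 0 ≤ s → 0 ≤ picD q 1 0 (n+1) s := fun s hs =>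
      intervalIntegral.integral_nonneg hs (fun r _ => mul_nonneg (hq0 r) (ih r))
    have hInp : ∀ s, s ≤ 0 → picD q 1 0 (n+1) s ≤ 0 := by
      intro s hs
      show (∫ r in (0:ℝ)..s, q r * pic q 1 0 n r) ≤ 0
      rw [show (∫ r in (0:ℝ)..s, q r * pic q 1 0 n r)
          = -∫ r in s..(0:ℝ), q r * pic q 1 0 n r from intervalIntegral.integral_symm s 0]
      have : (0:ℝ) ≤ ∫ r in s..(0:ℝ), q r * pic q 1 0 n r :=
        intervalIntegral.integral_nonneg hs (fun r _ => mul_nonneg (hq0 r) (ih r))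
      linarith
    rw [pic_succ_eq]
    rcases le_total 0 t with ht | ht
    · exact intervalIntegral.integral_nonneg ht (fun s hs => hInn s hs.1)
    · rw [show (∫ s in (0:ℝ)..t, picD q 1 0 (n+1) s)
          = -∫ s in t..(0:ℝ), picD q 1 0 (n+1) s from intervalIntegral.integral_symm t 0]
      have := my_integral_nonpos ht (fun s hs => hInp s hs.2)
      linarith

lemma pic_S_sign (hq0 : ∀ t, 0 ≤ q t) :
    ∀ n, (∀ t, 0 ≤ t → 0 ≤ pic q 0 1 n t) ∧ (∀ t, t ≤ 0 → pic q 0 1 n t ≤ 0) := by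
  intro n
  induction n with
  | zero =>
    constructor <;> intro t ht <;> show _ 
    · show (0:ℝ) ≤ 0 + 1 * t; linarith
    · show (0:ℝ) + 1 * t ≤ 0; linarith
  | succ n ih =>
    have hInn : ∀ s, 0 ≤ picD q 0 1 (n+1) s := by
      intro s
      rcases le_total 0 s with hs | hs
      · exact intervalIntegral.integral_nonneg hs
          (fun r hr => mul_nonneg (hq0 r) (ih.1 r hr.1))
      · show (0:ℝ) ≤ ∫ r in (0:ℝ)..s, q r * pic q 0 1 n r
        rw [show (∫ r in (0:ℝ)..s, q r * pic q 0 1 n r)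
            = -∫ r in s..(0:ℝ), q r * pic q 0 1 n r from intervalIntegral.integral_symm s 0]
        have := my_integral_nonpos hs
          (fun r hr => mul_nonpos_of_nonneg_of_nonpos (hq0 r) (ih.2 r hr.2))
        linarith
    constructor
    · intro t ht
      rw [pic_succ_eq]
      exact intervalIntegral.integral_nonneg ht (fun s _ => hInn s)
    · intro t ht
      rw [pic_succ_eq]
      rw [show (∫ s in (0:ℝ)..t, picD q 0 1 (n+1) s)
          = -∫ s in t..(0:ℝ), picD q 0 1 (n+1) s from intervalIntegral.integral_symm t 0]
      have : (0:ℝ) ≤ ∫ s in t..(0:ℝ), picD q 0 1 (n+1) s :=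
        intervalIntegral.integral_nonneg ht (fun s _ => hInn s)
      linarith

lemma sol_C_ge_one (hq : Continuous q) (hq0 : ∀ t, 0 ≤ q t) {c : ℝ} (hqc : ∀ t, q t ≤ c^2)
    (hc : 0 ≤ c) (t : ℝ) : 1 ≤ sol q 1 0 t := by
  have hsum : Summable (fun n => pic q 1 0 n t) := summable_pic hq hq0 hqc hc t
  have h0 : pic q 1 0 0 t = 1 := by show (1:ℝ) + 0 * t = 1; ring
  have := Summable.le_tsum hsum 0 (fun j _ => pic_C_nonneg hq0 j t)
  rw [h0] at this
  exact this

lemma sol_S_le (hq : Continuous q) (hq0 : ∀ t, 0 ≤ q t) {c : ℝ} (hqc : ∀ t, q t ≤ c^2)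
    (hc : 0 ≤ c) {t : ℝ} (ht : t ≤ 0) : sol q 0 1 t ≤ t := by
  have hsum : Summable (fun n => pic q 0 1 n t) := summable_pic hq hq0 hqc hc t
  have h0 : pic q 0 1 0 t = t := by show (0:ℝ) + 1 * t = t; ring
  unfold sol
  rw [Summable.tsum_eq_zero_add hsum, h0]
  have : (∑' n, pic q 0 1 (n+1) t) ≤ 0 :=
    tsum_nonpos (fun n => ((pic_S_sign hq0 (n+1)).2) t ht)
  linarith

lemma sol_S_ge (hq : Continuous q) (hq0 : ∀ t, 0 ≤ q t) {c : ℝ} (hqc : ∀ t, q t ≤ c^2)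
    (hc : 0 ≤ c) {t : ℝ} (ht : 0 ≤ t) : t ≤ sol q 0 1 t := by
  have hsum : Summable (fun n => pic q 0 1 n t) := summable_pic hq hq0 hqc hc t
  have h0 : pic q 0 1 0 t = t := by show (0:ℝ) + 1 * t = t; ring
  unfold sol
  rw [Summable.tsum_eq_zero_add hsum, h0]
  have : (0:ℝ) ≤ ∑' n, pic q 0 1 (n+1) t :=
    tsum_nonneg (fun n => ((pic_S_sign hq0 (n+1)).1) t ht)
  linarith

end

lemma deriv_nonneg_of_bddAbove {f : ℝ → ℝ} (hf : Differentiable ℝ f)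
    (hmono : Monotone (deriv f)) {B x₀ : ℝ} (hB : ∀ t ≤ x₀, f t ≤ B) :
    ∀ t ≤ x₀, 0 ≤ deriv f t := by
  intro t₀ ht₀
  by_contra hneg
  push_neg at hneg
  set m := deriv f t₀ with hm
  have hmneg : 0 < -m := by linarith
  have hBt₀ : f t₀ ≤ B := hB t₀ ht₀
  set t := t₀ - (B - f t₀ + 1) / (-m) with htdef
  have hq : 0 < (B - f t₀ + 1) / (-m) := div_pos (by linarith) hmneg
  have htlt : t < t₀ := by rw [htdef]; linarith
  obtain ⟨ξ, hξ, hslope⟩ := exists_deriv_eq_slope f htlt hf.continuous.continuousOn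
    hf.differentiableOn
  have hξle : deriv f ξ ≤ m := hmono (le_of_lt hξ.2)
  have hpos : 0 < t₀ - t := by linarith
  have h1 : f t₀ - f t = deriv f ξ * (t₀ - t) := by
    rw [hslope]; field_simp
  have h2 : f t₀ - f t ≤ m * (t₀ - t) := by
    rw [h1]; exact mul_le_mul_of_nonneg_right hξle hpos.le
  have h3 : m * (t₀ - t) = -(B - f t₀ + 1) := by
    rw [htdef, sub_sub_cancel, mul_div_assoc', div_neg, mul_comm m, mul_div_assoc, div_self hneg.ne,
      mul_one]
  have h4 : f t ≤ B := hB t (by linarith)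
  rw [h3] at h2
  linarith

lemma jacobi_zero {q : ℝ → ℝ} {c : ℝ} (hq0 : ∀ t, 0 ≤ q t) (hqc : ∀ t, q t ≤ c^2)
    {d : ℝ → ℝ} (hd : Differentiable ℝ d) (hd' : Differentiable ℝ (deriv d))
    (hode : ∀ t, deriv (deriv d) t = q t * d t) (h0 : d 0 = 0) (h0' : deriv d 0 = 0) :
    ∀ t, d t = 0 := by
  set L := 1 + c ^ 2 with hLdef
  set h : ℝ → ℝ := fun t => d t ^ 2 + (deriv d t) ^ 2 with hhdef
  have hh : ∀ t, HasDerivAt h (2 * d t * deriv d t + 2 * deriv d t * (q t * d t)) t := by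
    intro t
    have h1 := (((hd t).hasDerivAt.pow 2).add (((hd' t).hasDerivAt).pow 2))
    exact h1.congr_deriv (by rw [hode t]; push_cast; ring)
  have hh0 : h 0 = 0 := by simp [hhdef, h0, h0']
  have hhnn : ∀ t, 0 ≤ h t := fun t => by positivity
  have hbound : ∀ t, |2 * d t * deriv d t + 2 * deriv d t * (q t * d t)| ≤ L * h t := by
    intro t
    have h1 : 0 ≤ q t := hq0 t
    have h2 : q t ≤ c ^ 2 := hqc t
    have h3 : |2 * d t * deriv d t + 2 * deriv d t * (q t * d t)|
        = |(1 + q t)| * |2 * d t * deriv d t| := by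
      rw [← abs_mul]; congr 1; ring
    rw [h3, abs_of_nonneg (by linarith : (0:ℝ) ≤ 1 + q t)]
    have h4 : |2 * d t * deriv d t| ≤ d t ^ 2 + (deriv d t) ^ 2 := by
      rw [abs_le]
      constructor <;> nlinarith [sq_nonneg (d t + deriv d t), sq_nonneg (d t - deriv d t)]
    calc (1 + q t) * |2 * d t * deriv d t| ≤ (1 + c^2) * (d t ^ 2 + (deriv d t) ^ 2) := by
          apply mul_le_mul (by linarith) h4 (abs_nonneg _) (by positivity)
      _ = L * h t := by rw [hLdef, hhdef]
  have hforward : ∀ t, 0 ≤ t → h t = 0 := by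
    intro t ht
    set φ : ℝ → ℝ := fun s => h s * Real.exp (-L * s) with hφdef
    have hφd : ∀ s, HasDerivAt φ
        ((2 * d s * deriv d s + 2 * deriv d s * (q s * d s) - L * h s) * Real.exp (-L * s)) s := by
      intro s
      have he : HasDerivAt (fun s : ℝ => Real.exp (-L * s)) (Real.exp (-L * s) * (-L)) s := by
        simpa using (((hasDerivAt_id s).const_mul (-L)).exp)
      have := (hh s).mul he
      exact this.congr_deriv (by ring)
    have hφanti : Antitone φ := by
      apply antitone_of_deriv_nonpos (fun s => (hφd s).differentiableAt)
      intro s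
      rw [(hφd s).deriv]
      have hb := hbound s
      have : 2 * d s * deriv d s + 2 * deriv d s * (q s * d s) - L * h s ≤ 0 := by
        have := (abs_le.1 hb).2; linarith
      exact mul_nonpos_of_nonpos_of_nonneg this (Real.exp_nonneg _)
    have : φ t ≤ φ 0 := hφanti ht
    rw [hφdef] at this
    simp only [mul_zero, Real.exp_zero, mul_one, hh0, zero_mul] at this
    have hexp : 0 < Real.exp (-L * t) := Real.exp_pos _
    have hle : h t ≤ 0 := nonpos_of_mul_nonpos_right (by linarith [this] :
      Real.exp (-L * t) * h t ≤ 0) hexp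
    exact le_antisymm hle (hhnn t)
  have hbackward : ∀ t, t ≤ 0 → h t = 0 := by
    intro t ht
    set ψ : ℝ → ℝ := fun s => h s * Real.exp (L * s) with hψdef
    have hψd : ∀ s, HasDerivAt ψ
        ((2 * d s * deriv d s + 2 * deriv d s * (q s * d s) + L * h s) * Real.exp (L * s)) s := by
      intro s
      have he : HasDerivAt (fun s : ℝ => Real.exp (L * s)) (Real.exp (L * s) * L) s := by
        simpa using (((hasDerivAt_id s).const_mul L).exp)
      have := (hh s).mul he
      exact this.congr_deriv (by ring)
    have hψmono : Monotone ψ := by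
      apply monotone_of_deriv_nonneg (fun s => (hψd s).differentiableAt)
      intro s
      rw [(hψd s).deriv]
      have hb := hbound s
      have : 0 ≤ 2 * d s * deriv d s + 2 * deriv d s * (q s * d s) + L * h s := by
        have := (abs_le.1 hb).1; linarith
      exact mul_nonneg this (Real.exp_nonneg _)
    have : ψ t ≤ ψ 0 := hψmono ht
    rw [hψdef] at this
    simp only [mul_zero, Real.exp_zero, mul_one, hh0, zero_mul] at this
    have hexp : 0 < Real.exp (L * t) := Real.exp_pos _
    have hle : h t ≤ 0 := nonpos_of_mul_nonpos_right (by linarith [this] :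
      Real.exp (L * t) * h t ≤ 0) hexp
    exact le_antisymm hle (hhnn t)
  intro t
  have hzero : h t = 0 := by
    rcases le_total 0 t with ht | ht
    · exact hforward t ht
    · exact hbackward t ht
  have h1 : d t ^ 2 = 0 := by
    have h2 : (0:ℝ) ≤ d t ^ 2 := sq_nonneg _
    have h3 : (0:ℝ) ≤ (deriv d t) ^ 2 := sq_nonneg _
    have := hzero
    rw [hhdef] at this
    simp only at this
    nlinarith
  exact pow_eq_zero_iff two_ne_zero |>.1 h1

lemma unstable_unique {q : ℝ → ℝ} {c : ℝ} (hq0 : ∀ t, 0 ≤ q t) (hqc : ∀ t, q t ≤ c^2)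
    {j₁ j₂ : ℝ → ℝ} {w : ℝ}
    (h1d : Differentiable ℝ j₁) (h1d' : Differentiable ℝ (deriv j₁))
    (h1ode : ∀ t, deriv (deriv j₁) t = q t * j₁ t) (h1w : j₁ 0 = w)
    (h1m : Monotone fun t => |j₁ t|)
    (h2d : Differentiable ℝ j₂) (h2d' : Differentiable ℝ (deriv j₂))
    (h2ode : ∀ t, deriv (deriv j₂) t = q t * j₂ t) (h2w : j₂ 0 = w)
    (h2m : Monotone fun t => |j₂ t|) : j₁ = j₂ := by
  set d : ℝ → ℝ := fun t => j₁ t - j₂ t with hd_def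
  have hdd : Differentiable ℝ d := h1d.sub h2d
  have hdder : deriv d = fun t => deriv j₁ t - deriv j₂ t :=
    funext fun t => deriv_sub (h1d t) (h2d t)
  have hdd' : Differentiable ℝ (deriv d) := by
    rw [hdder]; exact h1d'.sub h2d'
  have hdode : ∀ t, deriv (deriv d) t = q t * d t := by
    intro t
    rw [hdder, deriv_fun_sub (h1d' t) (h2d' t), h1ode, h2ode, hd_def]
    ring
  have hd0 : d 0 = 0 := by simp [hd_def, h1w, h2w]
  set g : ℝ → ℝ := fun t => d t ^ 2 with hg_def
  have hgd : ∀ t, HasDerivAt g (2 * d t * deriv d t) t := by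
    intro t
    have := (hdd t).hasDerivAt.pow 2
    exact this.congr_deriv (by push_cast; ring)
  have hgdiff : Differentiable ℝ g := fun t => (hgd t).differentiableAt
  have hgder : deriv g = fun t => 2 * d t * deriv d t := funext fun t => (hgd t).deriv
  have hg'd : ∀ t, HasDerivAt (fun t => 2 * d t * deriv d t)
      (2 * deriv d t * deriv d t + 2 * d t * (q t * d t)) t := by
    intro t
    have h1 := ((hdd t).hasDerivAt.const_mul 2).mul (hdd' t).hasDerivAt
    exact h1.congr_deriv (by rw [hdode t])
  have hgmono : Monotone (deriv g) := by
    rw [hgder]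
    apply monotone_of_deriv_nonneg (fun t => (hg'd t).differentiableAt)
    intro t
    rw [(hg'd t).deriv]
    have := hq0 t
    nlinarith [sq_nonneg (deriv d t), sq_nonneg (d t)]
  have hbdd : ∀ t ≤ (0:ℝ), g t ≤ (|w| + |w|)^2 := by
    intro t ht
    have hj1 : |j₁ t| ≤ |w| := by
      have := h1m ht
      simpa [h1w] using this
    have hj2 : |j₂ t| ≤ |w| := by
      have := h2m ht
      simpa [h2w] using this
    have habs : |d t| ≤ |w| + |w| := by
      calc |d t| ≤ |j₁ t| + |j₂ t| := abs_sub _ _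
        _ ≤ |w| + |w| := add_le_add hj1 hj2
    calc g t = |d t| ^ 2 := (sq_abs _).symm
      _ ≤ (|w| + |w|) ^ 2 := by
          apply pow_le_pow_left₀ (abs_nonneg _) habs
  have hderiv_nn : ∀ t ≤ (0:ℝ), 0 ≤ deriv g t :=
    deriv_nonneg_of_bddAbove hgdiff hgmono hbdd
  have hgmonoOn : MonotoneOn g (Iic (0:ℝ)) := by
    apply monotoneOn_of_deriv_nonneg (convex_Iic 0) hgdiff.continuous.continuousOn
      (hgdiff.differentiableOn)
    intro x hx
    rw [interior_Iic] at hx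
    exact hderiv_nn x (le_of_lt hx)
  have hg0 : g 0 = 0 := by simp [hg_def, hd0]
  have hdzero : ∀ t ≤ (0:ℝ), d t = 0 := by
    intro t ht
    have h1 : g t ≤ 0 := by
      have := hgmonoOn (mem_Iic.2 ht) (mem_Iic.2 le_rfl) ht
      rwa [hg0] at this
    have h2 : g t = 0 := le_antisymm h1 (sq_nonneg _)
    exact pow_eq_zero_iff two_ne_zero |>.1 h2
  have hd'0 : deriv d 0 = 0 := by
    have h1 : HasDerivWithinAt d (deriv d 0) (Iic 0) 0 :=
      (hdd 0).hasDerivAt.hasDerivWithinAt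
    have h2 : HasDerivWithinAt d 0 (Iic 0) 0 := by
      have hzero : HasDerivWithinAt (fun _ : ℝ => (0:ℝ)) 0 (Iic (0:ℝ)) 0 :=
        (hasDerivAt_const (0:ℝ) (0:ℝ)).hasDerivWithinAt
      exact hzero.congr (fun y hy => hdzero y hy) (hdzero 0 le_rfl)
    have hu : UniqueDiffWithinAt ℝ (Iic (0:ℝ)) 0 := uniqueDiffOn_Iic 0 0 (mem_Iic.2 le_rfl)
    rw [← h1.derivWithin hu, h2.derivWithin hu]
  have := jacobi_zero hq0 hqc hdd hdd' hdode hd0 hd'0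
  funext t
  have h := this t
  exact sub_eq_zero.1 h

lemma exists_unstable {q : ℝ → ℝ} {c : ℝ} (hq : Continuous q) (hq0 : ∀ t, 0 ≤ q t)
    (hqc : ∀ t, q t ≤ c ^ 2) (hc : 0 ≤ c) :
    ∃ j : ℝ → ℝ, Differentiable ℝ j ∧ Differentiable ℝ (deriv j) ∧
      (∀ t, deriv (deriv j) t = q t * j t) ∧ j 0 = 1 ∧ (∀ t, 0 ≤ j t) ∧ Monotone j := by
  set C : ℝ → ℝ := sol q 1 0 with hC_def
  set S : ℝ → ℝ := sol q 0 1 with hS_def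
  set C' : ℝ → ℝ := solD q 1 0 with hC'_def
  set S' : ℝ → ℝ := solD q 0 1 with hS'_def
  have hCd : ∀ t, HasDerivAt C (C' t) t := fun t => sol_hasDerivAt hq hq0 hqc hc t
  have hSd : ∀ t, HasDerivAt S (S' t) t := fun t => sol_hasDerivAt hq hq0 hqc hc t
  have hC'd : ∀ t, HasDerivAt C' (q t * C t) t := fun t => solD_hasDerivAt hq hq0 hqc hc t
  have hS'd : ∀ t, HasDerivAt S' (q t * S t) t := fun t => solD_hasDerivAt hq hq0 hqc hc t
  have hC0 : C 0 = 1 := sol_zero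
  have hS0 : S 0 = 0 := sol_zero
  have hC'0 : C' 0 = 0 := solD_zero
  have hS'0 : S' 0 = 1 := solD_zero
  have hC1 : ∀ t, 1 ≤ C t := fun t => sol_C_ge_one hq hq0 hqc hc t
  have hSneg : ∀ t, t < 0 → S t < 0 := fun t ht =>
    lt_of_le_of_lt (sol_S_le hq hq0 hqc hc (le_of_lt ht)) ht
  have hSnn : ∀ t, 0 ≤ t → 0 ≤ S t := fun t ht =>
    le_trans ht (sol_S_ge hq hq0 hqc hc ht)
  -- Wronskian
  set W : ℝ → ℝ := fun t => C t * S' t - C' t * S t with hW_def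
  have hWd : ∀ t, HasDerivAt W 0 t := by
    intro t
    have h := ((hCd t).mul (hS'd t)).sub ((hC'd t).mul (hSd t))
    exact h.congr_deriv (by ring)
  have hW1 : ∀ t, W t = 1 := by
    have hcst := is_const_of_deriv_eq_zero (fun t => (hWd t).differentiableAt)
      (fun t => (hWd t).deriv)
    intro t
    have := hcst t 0
    rw [this, hW_def]
    simp [hC0, hS0, hS'0, hC'0]
  -- the function ρ
  set ρ : ℝ → ℝ := fun s => C s / (-S s) with hρ_def
  have hρd : ∀ s, s < 0 → HasDerivAt ρ (1 / (S s) ^ 2) s := by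
    intro s hs
    have hSne : -S s ≠ 0 := ne_of_gt (by linarith [hSneg s hs])
    have h := (hCd s).div ((hSd s).neg) hSne
    refine h.congr_deriv ?_
    simp only [Pi.neg_apply]
    rw [neg_sq]
    have hw : C s * S' s - C' s * S s = 1 := hW1 s
    rw [show C' s * -S s - C s * -S' s = C s * S' s - C' s * S s by ring, hw]
  have hρmono : MonotoneOn ρ (Iio (0:ℝ)) := by
    apply monotoneOn_of_deriv_nonneg (convex_Iio 0)
    · intro s hs
      exact ((hρd s hs).continuousAt).continuousWithinAt
    · intro s hs
      rw [interior_Iio] at hs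
      exact ((hρd s hs).differentiableAt).differentiableWithinAt
    · intro s hs
      rw [interior_Iio] at hs
      rw [(hρd s hs).deriv]
      positivity
  have hρpos : ∀ s, s < 0 → 0 < ρ s := by
    intro s hs
    apply div_pos (lt_of_lt_of_le one_pos (hC1 s))
    linarith [hSneg s hs]
  -- infimum of ρ over negative s
  set V : ℝ := sInf (ρ '' Iio 0) with hV_def
  have hVne : (ρ '' Iio 0).Nonempty := ⟨ρ (-1), ⟨-1, by norm_num, rfl⟩⟩
  have hVbdd : BddBelow (ρ '' Iio 0) := by
    refine ⟨0, ?_⟩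
    rintro y ⟨s, hs, rfl⟩
    exact (hρpos s hs).le
  have hV0 : 0 ≤ V := by
    apply le_csInf hVne
    rintro y ⟨s, hs, rfl⟩
    exact (hρpos s hs).le
  have hVle : ∀ s, s < 0 → V ≤ ρ s := fun s hs => csInf_le hVbdd ⟨s, hs, rfl⟩
  -- the candidate solution
  set j : ℝ → ℝ := fun t => C t + V * S t with hj_def
  set j' : ℝ → ℝ := fun t => C' t + V * S' t with hj'_def
  have hjd : ∀ t, HasDerivAt j (j' t) t := fun t =>
    (hCd t).add ((hSd t).const_mul V)
  have hj'd : ∀ t, HasDerivAt j' (q t * j t) t := by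
    intro t
    have h := (hC'd t).add ((hS'd t).const_mul V)
    exact h.congr_deriv (by rw [hj_def]; ring)
  have hjder : deriv j = j' := funext fun t => (hjd t).deriv
  have hj0 : j 0 = 1 := by rw [hj_def]; simp [hC0, hS0]
  have hρmul : ∀ s, s < 0 → ρ s * S s = -C s := by
    intro s hs
    have hSne : S s ≠ 0 := ne_of_lt (hSneg s hs)
    show C s / -S s * S s = -C s
    rw [div_mul_eq_mul_div, div_neg, mul_div_assoc, div_self hSne, mul_one]
  have key1 : ∀ t, t ≤ 0 → 0 ≤ j t := by
    intro t ht
    rcases eq_or_lt_of_le ht with heq | hlt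
    · rw [heq, hj0]
      exact zero_le_one
    · have h1 : V ≤ ρ t := hVle t hlt
      have hSt : S t < 0 := hSneg t hlt
      have h2 : ρ t * S t ≤ V * S t := mul_le_mul_of_nonpos_right h1 hSt.le
      have h3 := hρmul t hlt
      rw [hj_def]
      simp only
      nlinarith [hC1 t]
  have key2 : ∀ t, t ≤ 0 → j t ≤ 1 := by
    intro t ht
    rcases eq_or_lt_of_le ht with heq | hlt
    · rw [heq, hj0]
    · apply le_of_forall_pos_le_add
      intro ε hε
      have hSt : S t < 0 := hSneg t hlt
      set ε' : ℝ := ε / (-S t) with hε'_def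
      have hε' : 0 < ε' := div_pos hε (by linarith)
      obtain ⟨y, hy_mem, hy_lt⟩ := exists_lt_of_csInf_lt hVne
        (show sInf (ρ '' Iio 0) < V + ε' by rw [← hV_def]; linarith)
      obtain ⟨s₁, hs₁, rfl⟩ := hy_mem
      set s₀ : ℝ := min s₁ t with hs₀_def
      have hs₀t : s₀ ≤ t := min_le_right _ _
      have hs₀0 : s₀ < 0 := lt_of_le_of_lt hs₀t hlt
      have hρs₀ : ρ s₀ ≤ ρ s₁ := hρmono hs₀0 hs₁ (min_le_left _ _)
      have hVlow : ρ s₀ - ε' ≤ V := by linarith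
      set J : ℝ → ℝ := fun u => C u + ρ s₀ * S u with hJ_def
      have hJs₀ : J s₀ = 0 := by
        have := hρmul s₀ hs₀0
        rw [hJ_def]; simp only; linarith
      have hJ0 : J 0 = 1 := by rw [hJ_def]; simp [hC0, hS0]
      have hJnn : ∀ u, s₀ ≤ u → u ≤ 0 → 0 ≤ J u := by
        intro u hu1 hu2
        rcases eq_or_lt_of_le hu2 with heq | hu2'
        · rw [heq, hJ0]; exact zero_le_one
        · have h1 : ρ s₀ ≤ ρ u := hρmono hs₀0 hu2' hu1
          have hSu : S u < 0 := hSneg u hu2'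
          have h2 : ρ u * S u ≤ ρ s₀ * S u := mul_le_mul_of_nonpos_right h1 hSu.le
          have h3 := hρmul u hu2'
          rw [hJ_def]; simp only; nlinarith
      have hJd : ∀ u, HasDerivAt J (C' u + ρ s₀ * S' u) u := fun u =>
        (hCd u).add ((hSd u).const_mul (ρ s₀))
      set J' : ℝ → ℝ := fun u => C' u + ρ s₀ * S' u with hJ'_def
      have hJ'd : ∀ u, HasDerivAt J' (q u * J u) u := by
        intro u
        have h := (hC'd u).add ((hS'd u).const_mul (ρ s₀))
        exact h.congr_deriv (by rw [hJ_def]; ring)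
      have hJ'mono : MonotoneOn J' (Icc s₀ 0) := by
        apply monotoneOn_of_deriv_nonneg (convex_Icc s₀ 0)
        · exact fun u _ => ((hJ'd u).continuousAt).continuousWithinAt
        · exact fun u _ => ((hJ'd u).differentiableAt).differentiableWithinAt
        · intro u hu
          rw [interior_Icc] at hu
          rw [(hJ'd u).deriv]
          exact mul_nonneg (hq0 u) (hJnn u hu.1.le hu.2.le)
      have hJt1 : J t ≤ 1 := by
        rcases eq_or_lt_of_le hs₀t with heq | hs₀lt
        · rw [← heq, hJs₀]; exact zero_le_one
        · by_contra hcon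
          push_neg at hcon
          have hJder : deriv J = J' := funext fun u => (hJd u).deriv
          obtain ⟨ξ₁, hξ₁, hslope₁⟩ := exists_deriv_eq_slope J hs₀lt
            (fun u _ => ((hJd u).continuousAt).continuousWithinAt)
            (fun u _ => ((hJd u).differentiableAt).differentiableWithinAt)
          obtain ⟨ξ₂, hξ₂, hslope₂⟩ := exists_deriv_eq_slope J hlt
            (fun u _ => ((hJd u).continuousAt).continuousWithinAt)
            (fun u _ => ((hJd u).differentiableAt).differentiableWithinAt)
          rw [hJder] at hslope₁ hslope₂
          rw [hJs₀] at hslope₁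
          rw [hJ0] at hslope₂
          have hmono12 : J' ξ₁ ≤ J' ξ₂ := by
            apply hJ'mono ⟨hξ₁.1.le, by linarith [hξ₁.2]⟩
              ⟨by linarith [hξ₂.1], hξ₂.2.le⟩
            linarith [hξ₁.2, hξ₂.1]
          have h₁pos : 0 < (J t - 0) / (t - s₀) :=
            div_pos (by linarith [hJnn t hs₀t ht]) (by linarith)
          have h₂neg : (1 - J t) / (0 - t) < 0 :=
            div_neg_of_neg_of_pos (by linarith) (by linarith)
          rw [hslope₁, hslope₂] at hmono12
          linarith
      have hfinal : j t ≤ J t + ε' * (-S t) := by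
        have h2 : V * S t ≤ (ρ s₀ - ε') * S t := mul_le_mul_of_nonpos_right hVlow hSt.le
        have h3 : (ρ s₀ - ε') * S t = ρ s₀ * S t + ε' * (-S t) := by ring
        rw [hj_def, hJ_def]
        simp only
        linarith
      have hε'S : ε' * (-S t) = ε := by
        rw [hε'_def]
        field_simp [ne_of_lt hSt]
      linarith
  have key3 : ∀ t, 0 ≤ t → 1 ≤ j t := by
    intro t ht
    have h1 : 0 ≤ V * S t := mul_nonneg hV0 (hSnn t ht)
    rw [hj_def]
    simp only
    linarith [hC1 t]
  have hjnn : ∀ t, 0 ≤ j t := by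
    intro t
    rcases le_total t 0 with ht | ht
    · exact key1 t ht
    · linarith [key3 t ht]
  have hj'mono : Monotone j' :=
    monotone_of_deriv_nonneg (fun t => (hj'd t).differentiableAt)
      (fun t => by rw [(hj'd t).deriv]; exact mul_nonneg (hq0 t) (hjnn t))
  have hj'nonneg : ∀ t, 0 ≤ j' t := by
    intro t
    rcases le_total t 0 with ht | ht
    · have hmono' : Monotone (deriv j) := by rw [hjder]; exact hj'mono
      have := deriv_nonneg_of_bddAbove (fun s => (hjd s).differentiableAt)
        hmono' key2 t ht
      rwa [hjder] at this
    · have hj'0 : j' 0 = V := by rw [hj'_def]; simp [hC'0, hS'0]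
      have := hj'mono ht
      rw [hj'0] at this
      linarith
  exact ⟨j, fun t => (hjd t).differentiableAt,
    (by rw [hjder]; exact fun t => (hj'd t).differentiableAt),
    (fun t => by rw [hjder]; exact (hj'd t).deriv), hj0, hjnn,
    monotone_of_deriv_nonneg (fun t => (hjd t).differentiableAt)
      (fun t => by rw [hjder]; exact hj'nonneg t)⟩

/-- Let `K : ℝ → ℝ` be continuous with `-c² ≤ K t ≤ 0` for all `t`, for some
constant `c > 0`. Then for every `w ∈ ℝ` there is a unique Jacobi solution
(`j'' = -K · j`) with `j 0 = w` such that `t ↦ |j t|` is nondecreasing on `ℝ`: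
a unique unstable Jacobi field with prescribed initial value. -/
theorem exists_unique_unstable_jacobi (K : ℝ → ℝ) (c : ℝ) (hc : 0 < c)
    (hK : Continuous K) (hKle : ∀ t, K t ≤ 0) (hKge : ∀ t, -c ^ 2 ≤ K t)
    (w : ℝ) :
    ∃! j : ℝ → ℝ,
      Differentiable ℝ j ∧ Differentiable ℝ (deriv j) ∧
      (∀ t, deriv (deriv j) t = -K t * j t) ∧
      j 0 = w ∧ Monotone (fun t => |j t|) := by
  set q : ℝ → ℝ := fun t => -K t with hq_def
  have hq : Continuous q := hK.neg
  have hq0 : ∀ t, 0 ≤ q t := fun t => neg_nonneg.2 (hKle t)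
  have hqc : ∀ t, q t ≤ c ^ 2 := fun t => by
    have := hKge t
    simp only [hq_def]
    linarith
  obtain ⟨j₀, hj₀d, hj₀d', hj₀ode, hj₀1, hj₀nn, hj₀mono⟩ :=
    exists_unstable hq hq0 hqc hc.le
  set j : ℝ → ℝ := fun t => w * j₀ t with hj_def
  have hjd : Differentiable ℝ j := hj₀d.const_mul w
  have hjder : deriv j = fun t => w * deriv j₀ t :=
    funext fun t => deriv_const_mul w (hj₀d t)
  have hjd' : Differentiable ℝ (deriv j) := by
    rw [hjder]; exact hj₀d'.const_mul w
  have hjode : ∀ t, deriv (deriv j) t = -K t * j t := by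
    intro t
    rw [hjder, deriv_const_mul w (hj₀d' t), hj₀ode t]
    show w * (q t * j₀ t) = -K t * (w * j₀ t)
    rw [hq_def]
    ring
  have hj0 : j 0 = w := by rw [hj_def]; simp [hj₀1]
  have hjabs : (fun t => |j t|) = fun t => |w| * j₀ t := by
    funext t
    rw [hj_def]
    simp only
    rw [abs_mul, abs_of_nonneg (hj₀nn t)]
  have hjmono : Monotone (fun t => |j t|) := by
    rw [hjabs]
    exact hj₀mono.const_mul (abs_nonneg w)
  refine ⟨j, ⟨hjd, hjd', hjode, hj0, hjmono⟩, ?_⟩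
  rintro y ⟨hyd, hyd', hyode, hy0, hymono⟩
  have hyode' : ∀ t, deriv (deriv y) t = q t * y t := fun t => hyode t
  have hjode' : ∀ t, deriv (deriv j) t = q t * j t := fun t => hjode t
  exact unstable_unique hq0 hqc hyd hyd' hyode' hy0 hymono hjd hjd' hjode' hj0 hjmono
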